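/- Let y > 1 be real and define φ_y(z) = [sin(π/y)/(1 − cos(π/y))]·tanh(πz/(2y)). Then φ_y is a holomorphic bijection from the horizontal strip S_y = {z ∈ ℂ : 0 < Im z < y} onto the upper half-plane ℍ, and moreover φ_y(0) = 0 and φ_y(i) = i. -/

import Mathlib

open Complex Real

/-- tanh in terms of exp(2w). -/
lemma tanh_exp_form (w : ℂ) (h : Complex.exp (2 * w) + 1 ≠ 0) :
    Complex.tanh w = (Complex.exp (2 * w) - 1) / (Complex.exp (2 * w) + 1) := by
  have hew : Complex.exp w ≠ 0 := Complex.exp_ne_zero w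
  have e2 : Complex.exp (2 * w) = Complex.exp w * Complex.exp w := by
    rw [two_mul, Complex.exp_add]
  have em : Complex.exp (-w) = (Complex.exp w)⁻¹ := Complex.exp_neg w
  have hden : Complex.exp w + (Complex.exp w)⁻¹ ≠ 0 := by
    intro h0
    apply h
    rw [e2]
    have : Complex.exp w * (Complex.exp w + (Complex.exp w)⁻¹) = 0 := by rw [h0]; ring
    rw [mul_add, mul_inv_cancel₀ hew] at this
    linear_combination this
  rw [e2] at h ⊢
  rw [Complex.tanh, Complex.sinh, Complex.cosh, em]
  field_simp

set_option maxHeartbeats 1000000 in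
theorem stmt_4 (y : ℝ) (hy : 1 < y) (φ : ℂ → ℂ)
    (hφ : ∀ z : ℂ, φ z =
      ((Real.sin (Real.pi / y) / (1 - Real.cos (Real.pi / y)) : ℝ) : ℂ) *
        Complex.tanh ((Real.pi : ℂ) * z / (2 * (y : ℂ)))) :
    DifferentiableOn ℂ φ {z : ℂ | 0 < z.im ∧ z.im < y} ∧
    Set.BijOn φ {z : ℂ | 0 < z.im ∧ z.im < y} {z : ℂ | 0 < z.im} ∧
    φ 0 = 0 ∧ φ Complex.I = Complex.I := by
  have hy0 : (0:ℝ) < y := by linarith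
  have hyC : (y:ℂ) ≠ 0 := by exact_mod_cast hy0.ne'
  have hπ : (0:ℝ) < Real.pi := Real.pi_pos
  set θ : ℝ := Real.pi / (2 * y) with hθdef
  clear_value θ
  have hθ0 : 0 < θ := by rw [hθdef]; positivity
  have hθπ : θ < Real.pi / 2 := by
    rw [hθdef, div_lt_div_iff₀ (by positivity) (by norm_num)]
    nlinarith
  have hsθ : 0 < Real.sin θ := Real.sin_pos_of_pos_of_lt_pi hθ0 (by linarith)
  have hcθ : 0 < Real.cos θ := Real.cos_pos_of_mem_Ioo ⟨by linarith, hθπ⟩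
  have ht2 : Real.pi / y = 2 * θ := by rw [hθdef]; field_simp
  set c : ℝ := Real.sin (Real.pi / y) / (1 - Real.cos (Real.pi / y)) with hcdef
  clear_value c
  have hc : c = Real.cos θ / Real.sin θ := by
    rw [hcdef, ht2, Real.sin_two_mul, Real.cos_two_mul']
    have h1 : 1 - (Real.cos θ ^ 2 - Real.sin θ ^ 2) = 2 * Real.sin θ ^ 2 := by
      nlinarith [Real.sin_sq_add_cos_sq θ]
    rw [h1]
    field_simp
  have hc0 : 0 < c := by rw [hc]; positivity
  have hcC : (c:ℂ) ≠ 0 := by exact_mod_cast hc0.ne'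
  -- the exponential substitute
  set E : ℂ → ℂ := fun z => Complex.exp ((Real.pi : ℂ) * z / y) with hEdef
  clear_value E
  have hEim : ∀ z : ℂ, 0 < z.im → z.im < y → 0 < (E z).im := by
    intro z h1 h2
    have him : ((Real.pi : ℂ) * z / y).im = Real.pi / y * z.im := by
      have : (Real.pi : ℂ) * z / y = ((Real.pi / y : ℝ) : ℂ) * z := by
        push_cast
        field_simp
        try ring
      rw [this]
      simp [Complex.mul_im]
    rw [hEdef]
    simp only [Complex.exp_im, him]
    have hs : 0 < Real.sin (Real.pi / y * z.im) := by
      apply Real.sin_pos_of_pos_of_lt_pi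
      · positivity
      · calc Real.pi / y * z.im < Real.pi / y * y := by
              apply mul_lt_mul_of_pos_left h2 (by positivity)
           _ = Real.pi := by field_simp
    positivity
  have hE1 : ∀ z : ℂ, 0 < (E z).im → E z + 1 ≠ 0 := by
    intro z hz h0
    have : (E z + 1).im = 0 := by rw [h0]; simp
    simp at this
    linarith
  -- representation of φ via E
  have hrepr : ∀ z : ℂ, E z + 1 ≠ 0 → φ z = (c : ℂ) * ((E z - 1) / (E z + 1)) := by
    intro z h1
    have h2w : 2 * ((Real.pi : ℂ) * z / (2 * y)) = (Real.pi : ℂ) * z / y := by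
      field_simp
    rw [hφ z]
    congr 1
    have h1' : Complex.exp (2 * ((Real.pi : ℂ) * z / (2 * y))) + 1 ≠ 0 := by
      rw [h2w]
      simpa [hEdef] using h1
    rw [tanh_exp_form _ h1', h2w, hEdef]
  -- imaginary part of φ in strip
  have hφim : ∀ z : ℂ, 0 < z.im → z.im < y → 0 < (φ z).im := by
    intro z h1 h2
    have hEi := hEim z h1 h2
    have hne := hE1 z hEi
    rw [hrepr z hne]
    rw [show ∀ q : ℂ, ((c:ℂ) * q).im = c * q.im from fun q => by simp [Complex.mul_im]]
    have hns : 0 < Complex.normSq (E z + 1) := Complex.normSq_pos.mpr hne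
    have : ((E z - 1) / (E z + 1)).im = 2 * (E z).im / Complex.normSq (E z + 1) := by
      rw [Complex.div_im, div_sub_div_same]
      congr 1
      simp only [Complex.sub_im, Complex.sub_re, Complex.add_im, Complex.add_re,
        Complex.one_im, Complex.one_re]
      ring
    rw [this]
    positivity
  refine ⟨?_, ⟨?_, ?_, ?_⟩, ?_, ?_⟩
  · -- DifferentiableOn
    intro z hz
    obtain ⟨h1, h2⟩ := hz
    have hne := hE1 z (hEim z h1 h2)
    have hne' : Complex.exp ((Real.pi : ℂ) * z / y) + 1 ≠ 0 := by
      simpa [hEdef] using hne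
    have hexp : ∀ w : ℂ, DifferentiableAt ℂ
        (fun w : ℂ => Complex.exp ((Real.pi : ℂ) * w / y)) w := by
      intro w
      apply DifferentiableAt.cexp
      fun_prop
    have hg : DifferentiableAt ℂ (fun w => (c : ℂ) *
        ((Complex.exp ((Real.pi : ℂ) * w / y) - 1) /
          (Complex.exp ((Real.pi : ℂ) * w / y) + 1))) z := by
      apply DifferentiableAt.const_mul
      apply DifferentiableAt.div
      · exact (hexp z).sub_const 1
      · exact (hexp z).add_const 1
      · exact hne'
    apply DifferentiableWithinAt.congr hg.differentiableWithinAt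
    · intro w hw
      rw [hrepr w (hE1 w (hEim w hw.1 hw.2)), hEdef]
    · rw [hrepr z hne, hEdef]
  · -- MapsTo
    intro z hz
    exact hφim z hz.1 hz.2
  · -- InjOn
    intro z₁ hz₁ z₂ hz₂ heq
    obtain ⟨h11, h12⟩ := hz₁
    obtain ⟨h21, h22⟩ := hz₂
    have hn1 := hE1 z₁ (hEim z₁ h11 h12)
    have hn2 := hE1 z₂ (hEim z₂ h21 h22)
    rw [hrepr z₁ hn1, hrepr z₂ hn2] at heq
    have hq : (E z₁ - 1) / (E z₁ + 1) = (E z₂ - 1) / (E z₂ + 1) :=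
      mul_left_cancel₀ hcC heq
    have hE : E z₁ = E z₂ := by
      field_simp at hq
      linear_combination hq / 2
    rw [hEdef] at hE
    simp only at hE
    obtain ⟨n, hn⟩ := Complex.exp_eq_exp_iff_exists_int.mp hE
    have him := congrArg Complex.im hn
    have hcast : ∀ w : ℂ, ((Real.pi : ℂ) * w / y).im = Real.pi / y * w.im := by
      intro w
      have : (Real.pi : ℂ) * w / y = ((Real.pi / y : ℝ) : ℂ) * w := by
        push_cast
        field_simp
        try ring
      rw [this]
      try simp [Complex.mul_im]
    rw [Complex.add_im, hcast, hcast] at him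
    have hnim : ((n : ℂ) * (2 * (Real.pi:ℂ) * Complex.I)).im = (n : ℝ) * (2 * Real.pi) := by
      simp [Complex.mul_im]
      try ring
    rw [hnim] at him
    have hb1 : 0 < Real.pi / y * z₁.im := by positivity
    have hb2 : Real.pi / y * z₁.im < Real.pi := by
      calc Real.pi / y * z₁.im < Real.pi / y * y := by
            apply mul_lt_mul_of_pos_left h12 (by positivity)
        _ = Real.pi := by field_simp
    have hb3 : 0 < Real.pi / y * z₂.im := by positivity
    have hb4 : Real.pi / y * z₂.im < Real.pi := by
      calc Real.pi / y * z₂.im < Real.pi / y * y := by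
            apply mul_lt_mul_of_pos_left h22 (by positivity)
        _ = Real.pi := by field_simp
    have hn0 : n = 0 := by
      rcases lt_trichotomy n 0 with h | h | h
      · have : (n : ℝ) ≤ -1 := by exact_mod_cast (by omega : n ≤ -1)
        nlinarith
      · exact h
      · have : (1 : ℝ) ≤ (n : ℝ) := by exact_mod_cast (by omega : 1 ≤ n)
        nlinarith
    rw [hn0] at hn
    simp only [Int.cast_zero, zero_mul, add_zero] at hn
    have hπC : (Real.pi : ℂ) ≠ 0 := by exact_mod_cast hπ.ne'
    field_simp [hπC] at hn
    exact hn
  · -- SurjOn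
    intro v hv
    have hvim : 0 < v.im := hv
    have hcv : (c : ℂ) - v ≠ 0 := by
      intro h0
      have : ((c:ℂ) - v).im = 0 := by rw [h0]; simp
      simp at this
      linarith
    set u : ℂ := ((c:ℂ) + v) / ((c:ℂ) - v) with hudef
    clear_value u
    have huim : 0 < u.im := by
      rw [hudef, Complex.div_im, div_sub_div_same]
      have hns : 0 < Complex.normSq ((c:ℂ) - v) := Complex.normSq_pos.mpr hcv
      have hnum : ((c:ℂ) + v).im * ((c:ℂ) - v).re - ((c:ℂ) + v).re * ((c:ℂ) - v).im
          = 2 * c * v.im := by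
        simp only [Complex.add_im, Complex.add_re, Complex.sub_im, Complex.sub_re,
          Complex.ofReal_im, Complex.ofReal_re]
        ring
      rw [hnum]
      positivity
    have hu0 : u ≠ 0 := by
      intro h0
      rw [h0] at huim
      simp at huim
    -- z candidate
    set z : ℂ := ((y / Real.pi : ℝ) : ℂ) * Complex.log u with hzdef
    clear_value z
    have hzim : z.im = y / Real.pi * Complex.arg u := by
      rw [hzdef]
      simp [Complex.mul_im, Complex.log_im]
    have harg0 : 0 < Complex.arg u := by
      rcases lt_or_eq_of_le (Complex.arg_nonneg_iff.mpr huim.le) with h | h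
      · exact h
      · exfalso
        have := Complex.arg_eq_zero_iff.mp h.symm
        linarith [this.2, huim]
    have hargπ : Complex.arg u < Real.pi := by
      rcases lt_or_eq_of_le (Complex.arg_le_pi u) with h | h
      · exact h
      · exfalso
        have := Complex.arg_eq_pi_iff.mp h
        linarith [this.2, huim]
    have hz1 : 0 < z.im := by rw [hzim]; positivity
    have hz2 : z.im < y := by
      rw [hzim]
      calc y / Real.pi * Complex.arg u < y / Real.pi * Real.pi := by
            apply mul_lt_mul_of_pos_left hargπ (by positivity)
        _ = y := by field_simp
    refine ⟨z, ⟨hz1, hz2⟩, ?_⟩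
    have hEz : E z = u := by
      rw [hEdef]
      simp only
      have hπC : (Real.pi : ℂ) ≠ 0 := by exact_mod_cast hπ.ne'
      have : (Real.pi : ℂ) * z / y = Complex.log u := by
        rw [hzdef]
        push_cast
        field_simp
        try ring
      rw [this, Complex.exp_log hu0]
    have hu1 : u + 1 ≠ 0 := by
      have := hE1 z (by rw [hEz]; exact huim)
      rwa [hEz] at this
    rw [hrepr z (by rw [hEz]; exact hu1), hEz]
    -- c * (u - 1)/(u + 1) = v
    have hkey : (c:ℂ) * (u - 1) = v * (u + 1) := by
      rw [hudef]
      field_simp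
      ring
    rw [← mul_div_assoc]
    rw [hkey]
    exact mul_div_cancel_right₀ v hu1
  · -- φ 0 = 0
    rw [hφ 0]
    simp
  · -- φ I = I
    rw [hφ Complex.I]
    have harg : (Real.pi : ℂ) * Complex.I / (2 * y) = (θ : ℂ) * Complex.I := by
      rw [hθdef]
      push_cast
      field_simp
      try ring
    rw [harg, Complex.tanh_mul_I]
    have htan : Complex.tan (θ : ℂ) = ((Real.tan θ : ℝ) : ℂ) := by
      rw [← Complex.ofReal_tan]
    rw [htan]
    have : (c : ℂ) * ((Real.tan θ : ℝ) : ℂ) = 1 := by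
      rw [← Complex.ofReal_mul]
      norm_cast
      rw [hc, Real.tan_eq_sin_div_cos]
      field_simp
    rw [← mul_assoc, this, one_mul]
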